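/- Assume critical separation $(a_1-a_2)(b_1-b_2)=(\sqrt{p_1^*}+\sqrt{p_2^*})^2$ and $0<t<t_{\mathrm{crit}}=\frac{a_1-a_2}{(a_1-a_2)+(b_1-b_2)}$, so that $(1-t)(a_1-a_2)-t(b_1-b_2)>0$. With $\xi_j^*$ defined as in the paper (equation (92)), one has $\xi_4^*(x_0^*)-\xi_1^*(x_0^*) = \frac{1}{2t(1-t)}\big((1-t)(a_1-a_2)-t(b_1-b_2)\big)\cdot\frac{2\sqrt{p_1^*}}{\sqrt{p_1^*}+\sqrt{p_2^*}} > 0$. -/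

import Mathlib

theorem stmt_8 (a₁ a₂ b₁ b₂ t p₁ p₂ : ℝ) (ha : a₁ > a₂) (hb : b₁ > b₂)
    (ht : t ∈ Set.Ioo (0:ℝ) 1) (hp₁ : p₁ ∈ Set.Ioo (0:ℝ) 1) (hp₂ : p₂ ∈ Set.Ioo (0:ℝ) 1)
    (hcrit : (a₁ - a₂) * (b₁ - b₂) = (Real.sqrt p₁ + Real.sqrt p₂) ^ 2)
    (htcrit : t < (a₁ - a₂) / ((a₁ - a₂) + (b₁ - b₂)))
    (α₁ β₁ α₂ β₂ x₀ : ℝ)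
    (hα₁ : α₁ = (1 - t) * a₁ + t * b₁ - Real.sqrt (4 * p₁ * t * (1 - t)))
    (hβ₁ : β₁ = (1 - t) * a₁ + t * b₁ + Real.sqrt (4 * p₁ * t * (1 - t)))
    (hα₂ : α₂ = (1 - t) * a₂ + t * b₂ - Real.sqrt (4 * p₂ * t * (1 - t)))
    (hβ₂ : β₂ = (1 - t) * a₂ + t * b₂ + Real.sqrt (4 * p₂ * t * (1 - t)))
    (hx₀ : x₀ = Real.sqrt p₁ / (Real.sqrt p₁ + Real.sqrt p₂) * ((α₂ + β₂) / 2)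
        + Real.sqrt p₂ / (Real.sqrt p₁ + Real.sqrt p₂) * ((α₁ + β₁) / 2)) :
    0 < (1 - t) * (a₁ - a₂) - t * (b₁ - b₂) ∧
    (1 / (2 * t * (1 - t))) *
        (-(1 - t) * a₂ + t * b₂ - Real.sqrt ((x₀ - α₂) * (x₀ - β₂))) -
      (1 / (2 * t * (1 - t))) *
        (-(1 - t) * a₁ + t * b₁ - Real.sqrt ((α₁ - x₀) * (β₁ - x₀))) =
      (1 / (2 * t * (1 - t))) * ((1 - t) * (a₁ - a₂) - t * (b₁ - b₂)) *
        (2 * Real.sqrt p₁ / (Real.sqrt p₁ + Real.sqrt p₂)) ∧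
    0 < (1 / (2 * t * (1 - t))) * ((1 - t) * (a₁ - a₂) - t * (b₁ - b₂)) *
        (2 * Real.sqrt p₁ / (Real.sqrt p₁ + Real.sqrt p₂)) := by
  obtain ⟨ht0, ht1⟩ := ht
  obtain ⟨hp10, hp11⟩ := hp₁
  obtain ⟨hp20, hp21⟩ := hp₂
  set s₁ := Real.sqrt p₁ with hs₁
  set s₂ := Real.sqrt p₂ with hs₂
  have hs₁0 : 0 < s₁ := Real.sqrt_pos.mpr hp10
  have hs₂0 : 0 < s₂ := Real.sqrt_pos.mpr hp20
  have hS0 : 0 < s₁ + s₂ := by linarith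
  have hs₁sq : s₁ ^ 2 = p₁ := Real.sq_sqrt hp10.le
  have hs₂sq : s₂ ^ 2 = p₂ := Real.sq_sqrt hp20.le
  have ht1' : 0 < 1 - t := by linarith
  -- D > 0
  have hAB : 0 < (a₁ - a₂) + (b₁ - b₂) := by linarith
  have hD : 0 < (1 - t) * (a₁ - a₂) - t * (b₁ - b₂) := by
    have h := (lt_div_iff₀ hAB).mp htcrit
    nlinarith
  set D := (1 - t) * (a₁ - a₂) - t * (b₁ - b₂) with hDdef
  -- sqrt of 4 p t (1-t)
  have hr₁ : Real.sqrt (4 * p₁ * t * (1 - t)) ^ 2 = 4 * p₁ * t * (1 - t) :=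
    Real.sq_sqrt (by positivity)
  have hr₂ : Real.sqrt (4 * p₂ * t * (1 - t)) ^ 2 = 4 * p₂ * t * (1 - t) :=
    Real.sq_sqrt (by positivity)
  set r₁ := Real.sqrt (4 * p₁ * t * (1 - t)) with hr₁def
  set r₂ := Real.sqrt (4 * p₂ * t * (1 - t)) with hr₂def
  set c₁ := (1 - t) * a₁ + t * b₁ with hc₁
  set c₂ := (1 - t) * a₂ + t * b₂ with hc₂
  have hx₀' : x₀ = (s₁ * c₂ + s₂ * c₁) / (s₁ + s₂) := by
    rw [hx₀, hα₁, hβ₁, hα₂, hβ₂]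
    field_simp
    ring
  have hcc : c₁ - c₂ = (1 - t) * (a₁ - a₂) + t * (b₁ - b₂) := by rw [hc₁, hc₂]; ring
  -- key product identities
  have hprod₁ : (α₁ - x₀) * (β₁ - x₀) = (s₁ * D / (s₁ + s₂)) ^ 2 := by
    rw [hα₁, hβ₁, hx₀']
    have h1 : ((1 - t) * a₁ + t * b₁ - r₁ - (s₁ * c₂ + s₂ * c₁) / (s₁ + s₂)) *
        ((1 - t) * a₁ + t * b₁ + r₁ - (s₁ * c₂ + s₂ * c₁) / (s₁ + s₂)) =
        (s₁ * (c₁ - c₂) / (s₁ + s₂)) ^ 2 - r₁ ^ 2 := by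
      rw [hc₁]
      field_simp
      ring
    rw [h1, hr₁]
    have : p₁ = s₁ ^ 2 := hs₁sq.symm
    rw [this]
    have hcd : (c₁ - c₂) ^ 2 - 4 * (s₁ + s₂) ^ 2 * t * (1 - t) = D ^ 2 := by
      rw [hcc, hDdef, ← hcrit]; ring
    field_simp
    linear_combination s₁ ^ 2 * hcd + 4 * t * (1 - t) * (1 - s₁ ^ 2) * hcrit
  have hprod₂ : (x₀ - α₂) * (x₀ - β₂) = (s₂ * D / (s₁ + s₂)) ^ 2 := by
    rw [hα₂, hβ₂, hx₀']
    have h1 : ((s₁ * c₂ + s₂ * c₁) / (s₁ + s₂) - ((1 - t) * a₂ + t * b₂ - r₂)) *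
        ((s₁ * c₂ + s₂ * c₁) / (s₁ + s₂) - ((1 - t) * a₂ + t * b₂ + r₂)) =
        (s₂ * (c₁ - c₂) / (s₁ + s₂)) ^ 2 - r₂ ^ 2 := by
      rw [hc₂]
      field_simp
      ring
    rw [h1, hr₂]
    have : p₂ = s₂ ^ 2 := hs₂sq.symm
    rw [this]
    have hcd : (c₁ - c₂) ^ 2 - 4 * (s₁ + s₂) ^ 2 * t * (1 - t) = D ^ 2 := by
      rw [hcc, hDdef, ← hcrit]; ring
    field_simp
    linear_combination s₂ ^ 2 * hcd + 4 * t * (1 - t) * (1 - s₂ ^ 2) * hcrit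
  have hsq₁ : Real.sqrt ((α₁ - x₀) * (β₁ - x₀)) = s₁ * D / (s₁ + s₂) := by
    rw [hprod₁, Real.sqrt_sq (by positivity)]
  have hsq₂ : Real.sqrt ((x₀ - α₂) * (x₀ - β₂)) = s₂ * D / (s₁ + s₂) := by
    rw [hprod₂, Real.sqrt_sq (by positivity)]
  refine ⟨hD, ?_, by positivity⟩
  rw [hsq₁, hsq₂, hDdef]
  field_simp
  ring
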